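/- Every linear coloring of a path graph P_n on n vertices uses at least log2(n+1) colors. -/

import Mathlib

/-- A linear coloring: every path in `G` contains a vertex whose color appears
exactly once on the path. -/
def IsLinearColoring {V C : Type*} [DecidableEq C] (G : SimpleGraph V) (ψ : V → C) : Prop :=
  ∀ ⦃u v : V⦄ (p : G.Walk u v), p.IsPath →
    ∃ w ∈ p.support, (p.support.map ψ).count (ψ w) = 1

/-- A centered coloring: every nonempty vertex set inducing a connected subgraph
contains a vertex whose color appears exactly once in the set. -/
def IsCenteredColoring {V C : Type*} [DecidableEq C] (G : SimpleGraph V) (φ : V → C) : Prop :=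
  ∀ S : Finset V, S.Nonempty → (G.induce (S : Set V)).Connected →
    ∃ w ∈ S, (S.filter (fun x => φ x = φ w)).card = 1

/-- The linear coloring number: minimum number of colors of a linear coloring. -/
noncomputable def chiLin {V : Type*} (G : SimpleGraph V) : ℕ :=
  sInf {k | ∃ ψ : V → Fin k, IsLinearColoring G ψ}

/-- The centered coloring number: minimum number of colors of a centered coloring. -/
noncomputable def chiCen {V : Type*} (G : SimpleGraph V) : ℕ :=
  sInf {k | ∃ φ : V → Fin k, IsCenteredColoring G φ}

/-- A treedepth decomposition of `G`: a rooted forest on the vertices of `G`,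
given by its ancestor relation `anc` (a partial order whose down-sets are chains),
such that every edge of `G` joins an ancestor-descendant pair. -/
structure TreedepthDecomp {V : Type*} (G : SimpleGraph V) where
  anc : V → V → Prop
  refl : ∀ v, anc v v
  antisymm : ∀ u v, anc u v → anc v u → u = v
  trans : ∀ u v w, anc u v → anc v w → anc u w
  chain : ∀ u v w, anc u w → anc v w → anc u v ∨ anc v u
  edge : ∀ u v, G.Adj u v → anc u v ∨ anc v u

/-- The decomposition has depth at most `k`: every ancestor-descendant chain has
at most `k` vertices. -/
def TreedepthDecomp.depthLE {V : Type*} {G : SimpleGraph V} (d : TreedepthDecomp G)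
    (k : ℕ) : Prop :=
  ∀ s : Finset V, (∀ a ∈ s, ∀ b ∈ s, d.anc a b ∨ d.anc b a) → s.card ≤ k

/-- The treedepth of `G`: minimum depth of a treedepth decomposition. -/
noncomputable def treedepth {V : Type*} (G : SimpleGraph V) : ℕ :=
  sInf {k | ∃ d : TreedepthDecomp G, d.depthLE k}


/-- Every list in which every nonempty infix has an element occurring exactly once
has length `< 2 ^ (number of distinct elements)`. -/
lemma listLinearAux : ∀ (N : ℕ) (ℓ : List ℕ), ℓ.length ≤ N →
    (∀ t : List ℕ, t <:+: ℓ → t ≠ [] → ∃ a ∈ t, t.count a = 1) →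
    ℓ.length < 2 ^ ℓ.toFinset.card := by
  intro N
  induction N with
  | zero => intro ℓ hlen _; interval_cases h : ℓ.length; simp_all
  | succ N IH =>
    intro ℓ hlen H
    rcases eq_or_ne ℓ [] with rfl | hne
    · simp
    obtain ⟨a, ha, hcount⟩ := H ℓ List.infix_rfl hne
    obtain ⟨l, r, rfl⟩ := List.append_of_mem ha
    have hla : a ∉ l ∧ a ∉ r := by
      rw [List.count_append, List.count_cons] at hcount
      simp at hcount
      constructor <;> rw [← List.count_eq_zero] <;> omega
    have hlinf : l <:+: l ++ a :: r := ⟨[], a :: r, by simp⟩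
    have hrinf : r <:+: l ++ a :: r := ⟨l ++ [a], [], by simp⟩
    have hlen' : (l ++ a :: r).length = l.length + r.length + 1 := by simp; omega
    have IHl := IH l (by omega) (fun t ht h0 => H t (ht.trans hlinf) h0)
    have IHr := IH r (by omega) (fun t ht h0 => H t (ht.trans hrinf) h0)
    set K := (l ++ a :: r).toFinset.card with hK
    have haK : a ∈ (l ++ a :: r).toFinset := by simp
    have hsubl : l.toFinset ⊆ (l ++ a :: r).toFinset.erase a := by
      intro x hx
      simp only [List.mem_toFinset] at hx
      refine Finset.mem_erase.2 ⟨fun h => hla.1 (h ▸ hx), by simp [hx]⟩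
    have hsubr : r.toFinset ⊆ (l ++ a :: r).toFinset.erase a := by
      intro x hx
      simp only [List.mem_toFinset] at hx
      refine Finset.mem_erase.2 ⟨fun h => hla.2 (h ▸ hx), by simp [hx]⟩
    have hcard : ((l ++ a :: r).toFinset.erase a).card = K - 1 :=
      Finset.card_erase_of_mem haK
    have hK1 : 1 ≤ K := Finset.card_pos.2 ⟨a, haK⟩
    have h2l : 2 ^ l.toFinset.card ≤ 2 ^ (K - 1) :=
      Nat.pow_le_pow_right (by norm_num) (hcard ▸ Finset.card_le_card hsubl)
    have h2r : 2 ^ r.toFinset.card ≤ 2 ^ (K - 1) :=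
      Nat.pow_le_pow_right (by norm_num) (hcard ▸ Finset.card_le_card hsubr)
    have h2K : 2 ^ K = 2 * 2 ^ (K - 1) := by
      rw [← pow_succ']
      congr 1
      omega
    omega

lemma listLinear (ℓ : List ℕ)
    (H : ∀ t : List ℕ, t <:+: ℓ → t ≠ [] → ∃ a ∈ t, t.count a = 1) :
    ℓ.length < 2 ^ ℓ.toFinset.card := listLinearAux ℓ.length ℓ le_rfl H

/-- The walk along the path graph from `i` to `i + m`. -/
lemma pathWalk (n : ℕ) : ∀ (m i : ℕ) (h : i + m < n),
    ∃ p : (SimpleGraph.pathGraph n).Walk ⟨i, by omega⟩ ⟨i + m, by omega⟩,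
      p.support.map Fin.val = List.range' i (m + 1) := by
  intro m
  induction m with
  | zero => intro i h; exact ⟨.nil, by simp⟩
  | succ m ih =>
    intro i h
    obtain ⟨p, hp⟩ := ih i (by omega)
    have hadj : (SimpleGraph.pathGraph n).Adj ⟨i + m, by omega⟩ ⟨i + (m + 1), by omega⟩ :=
      SimpleGraph.pathGraph_adj.2 (Or.inl rfl)
    refine ⟨p.concat hadj, ?_⟩
    rw [SimpleGraph.Walk.support_concat, List.map_append, hp]
    have : List.range' i (m + 1 + 1) = List.range' i (m + 1) ++ [i + 1 * (m + 1)] :=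
      List.range'_concat (s := i) (n := m + 1)
    simpa using this.symm

/-- Every linear coloring of the path on `n` vertices uses at least
`log₂ (n + 1)` colors. -/
theorem linearColoring_pathGraph_lower_bound (n : ℕ) (ψ : Fin n → ℕ)
    (h : IsLinearColoring (SimpleGraph.pathGraph n) ψ) :
    Real.logb 2 (n + 1) ≤ ((Finset.univ.image ψ).card : ℝ) := by
  classical
  set c : ℕ → ℕ := fun k => if hk : k < n then ψ ⟨k, hk⟩ else 0 with hc
  have hψ : ∀ v : Fin n, ψ v = c v.val := by
    intro v
    simp [hc, v.isLt]
  set ℓ : List ℕ := (List.range n).map c with hℓ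
  have hℓlen : ℓ.length = n := by simp [hℓ]
  have Hmain : ∀ t : List ℕ, t <:+: ℓ → t ≠ [] → ∃ a ∈ t, t.count a = 1 := by
    intro t ht h0
    obtain ⟨l₁, l₂, hdecomp⟩ := ht
    have hlen : l₁.length + t.length + l₂.length = n := by
      have := congrArg List.length hdecomp
      simp [hℓ] at this
      omega
    set i := l₁.length with hi
    set m := t.length with hm
    have hm1 : 1 ≤ m := List.length_pos_iff.2 h0
    have htval : t = (List.range' i m).map c := by
      apply List.ext_getElem (by simp [hm])
      intro j hj hj'
      have hidx : i + j < ((l₁ ++ t) ++ l₂).length := by simp; omega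
      have hidx2 : i + j < (l₁ ++ t).length := by simp; omega
      have h1 : ((l₁ ++ t) ++ l₂)[i + j]'hidx = t[j] := by
        rw [List.getElem_append_left hidx2, List.getElem_append_right (by omega)]
        congr 1
        omega
      have h2 : ((l₁ ++ t) ++ l₂)[i + j]'hidx = c (i + j) := by
        have h3 : (l₁ ++ t) ++ l₂ = ℓ := hdecomp
        simp_rw [h3, hℓ]
        simp
      rw [← h1, h2]
      simp
    obtain ⟨p, hp⟩ := pathWalk n (m - 1) i (by omega)
    have hsupp : p.support.map Fin.val = List.range' i m := by
      rw [hp]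
      congr 1
      omega
    have hpath : p.IsPath := by
      apply SimpleGraph.Walk.IsPath.mk'
      apply List.Nodup.of_map Fin.val
      rw [hsupp]
      exact List.nodup_range'
    have hmapψ : p.support.map ψ = t := by
      have e1 : p.support.map ψ = (List.range' i m).map c := by
        rw [← hsupp, List.map_map]
        exact List.map_congr_left fun v _ => hψ v
      exact e1.trans htval.symm
    obtain ⟨w, hw, hcount⟩ := h p hpath
    exact ⟨ψ w, hmapψ ▸ List.mem_map_of_mem (f := ψ) hw, hmapψ ▸ hcount⟩
  have hlt : n < 2 ^ ℓ.toFinset.card := hℓlen ▸ listLinear ℓ Hmain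
  have hsub : ℓ.toFinset ⊆ Finset.univ.image ψ := by
    intro x hx
    simp only [hℓ, List.mem_toFinset, List.mem_map, List.mem_range] at hx
    obtain ⟨k, hk, rfl⟩ := hx
    simp only [hc, dif_pos hk]
    exact Finset.mem_image_of_mem ψ (Finset.mem_univ _)
  have hcards : ℓ.toFinset.card ≤ (Finset.univ.image ψ).card := Finset.card_le_card hsub
  have hfin : n + 1 ≤ 2 ^ (Finset.univ.image ψ).card :=
    le_trans hlt (Nat.pow_le_pow_right (by norm_num) hcards)
  rw [Real.logb_le_iff_le_rpow one_lt_two (by positivity)]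
  rw [Real.rpow_natCast]
  exact_mod_cast hfin
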